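/- arXiv:1908.04038 — 4 statements merged into one kernel-verified Lean document; each statement's English description precedes it below -/
import Mathlib

section
/- Let S₀, S₁ ⊆ ℕ be sets of natural numbers such that ℕ \ 2^ℕ ⊆ S₁ (i.e. every natural number that is not a power of two belongs to S₁). Then the unary languages a^{S₀} and a^{S₁} are regularly separable if and only if S₀ is finite and S₀ ∩ S₁ = ∅. -/
/-- Two languages `K` and `L` are regularly separable if there is a regular
language `R` with `K ⊆ R` and `R ∩ L = ∅`. -/
def RegularlySeparable {α : Type} (K L : Language α) : Prop :=
  ∃ R : Language α, R.IsRegular ∧ K ≤ R ∧ R ⊓ L = ⊥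

/-- For `S ⊆ ℕ`, the unary language `a^S` over the one-letter alphabet. -/
def unaryLang (S : Set ℕ) : Language Unit :=
  {w : List Unit | w.length ∈ S}

/-- Saturating counter DFA over a one-letter alphabet. -/
def countDFA (N : ℕ) (S : Set ℕ) [DecidablePred (· ∈ S)] : DFA Unit (Fin (N + 2)) where
  step s _ := ⟨min (s.val + 1) (N + 1), by omega⟩
  start := ⟨0, by omega⟩
  accept := {s | s.val ∈ S}

lemma countDFA_evalFrom (N : ℕ) (S : Set ℕ) [DecidablePred (· ∈ S)]
    (w : List Unit) (s : Fin (N + 2)) :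
    ((countDFA N S).evalFrom s w).val = min (s.val + w.length) (N + 1) := by
  induction w generalizing s with
  | nil => simp [DFA.evalFrom]; omega
  | cons x xs ih =>
      have : (countDFA N S).evalFrom s (x :: xs)
          = (countDFA N S).evalFrom ((countDFA N S).step s x) xs := rfl
      rw [this, ih]
      simp only [countDFA, List.length_cons]
      omega

lemma finite_unary_regular (S : Set ℕ) (hS : S.Finite) : (unaryLang S).IsRegular := by
  classical
  obtain ⟨N, hN⟩ : ∃ N, ∀ n ∈ S, n ≤ N := by
    rcases hS.bddAbove with ⟨N, hN⟩
    exact ⟨N, fun n hn => hN hn⟩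
  refine ⟨Fin (N + 2), inferInstance, countDFA N S, ?_⟩
  ext w
  have hev := countDFA_evalFrom N S w (countDFA N S).start
  have hstart : ((countDFA N S).start).val = 0 := rfl
  rw [hstart, Nat.zero_add] at hev
  constructor
  · intro hw
    have : ((countDFA N S).eval w).val ∈ S := hw
    rw [DFA.eval, hev] at this
    by_cases hle : w.length ≤ N + 1
    · rwa [min_eq_left hle] at this
    · rw [min_eq_right (by omega)] at this
      exact absurd (hN _ this) (by omega)
  · intro hw
    have hle : w.length ≤ N := hN _ hw
    show ((countDFA N S).eval w).val ∈ S
    rw [DFA.eval, hev]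
    rw [min_eq_left (by omega : w.length ≤ N + 1)]; exact hw

theorem stmt0 (S₀ S₁ : Set ℕ) (h : ∀ x : ℕ, (¬ ∃ n : ℕ, x = 2 ^ n) → x ∈ S₁) :
    RegularlySeparable (unaryLang S₀) (unaryLang S₁) ↔ S₀.Finite ∧ S₀ ∩ S₁ = ∅ := by
  constructor
  · rintro ⟨R, ⟨σ, inst, M, rfl⟩, hsub, hdisj⟩
    have hdisj' : ∀ w : List Unit, w ∈ M.accepts → w.length ∉ S₁ := by
      intro w hw hw1
      have : w ∈ (M.accepts ⊓ unaryLang S₁ : Language Unit) := ⟨hw, hw1⟩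
      rw [hdisj] at this
      exact this
    have hpow : ∀ w : List Unit, w ∈ M.accepts → ∃ n, w.length = 2 ^ n := by
      intro w hw
      by_contra hc
      exact hdisj' w hw (h _ hc)
    -- all accepted words are short
    have hshort : ∀ w : List Unit, w ∈ M.accepts → w.length < Fintype.card σ := by
      intro w hw
      by_contra hc
      push_neg at hc
      obtain ⟨a, b, c, hx, _, hb, hpump⟩ := M.pumping_lemma hw hc
      have mem1 : (a ++ []) ++ c ∈ M.accepts :=
        hpump (Language.append_mem_mul
          (Language.append_mem_mul (Set.mem_singleton a) (Language.nil_mem_kstar _))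
          (Set.mem_singleton c))
      have mem2 : (a ++ b) ++ c ∈ M.accepts :=
        hpump (Language.append_mem_mul
          (Language.append_mem_mul (Set.mem_singleton a)
            (Language.mem_kstar.2 ⟨[b], by simp, fun y hy => by rw [List.mem_singleton.mp hy]; exact Set.mem_singleton b⟩))
          (Set.mem_singleton c))
      have mem3 : (a ++ (b ++ b)) ++ c ∈ M.accepts :=
        hpump (Language.append_mem_mul
          (Language.append_mem_mul (Set.mem_singleton a)
            (Language.mem_kstar.2 ⟨[b, b], by simp, fun y hy => by rcases List.mem_cons.mp hy with rfl | hy; exacts [Set.mem_singleton y, by rw [List.mem_singleton.mp hy]; exact Set.mem_singleton b]⟩))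
          (Set.mem_singleton c))
      obtain ⟨r, hr⟩ := hpow _ mem1
      obtain ⟨p, hp⟩ := hpow _ mem2
      obtain ⟨q, hq⟩ := hpow _ mem3
      simp only [List.length_append, List.length_nil] at hr hp hq
      have hbpos : 0 < b.length := List.length_pos_iff.2 hb
      -- 2^r + |b| = 2^p, 2^p + |b| = 2^q
      have h1 : 2 ^ r + b.length = 2 ^ p := by omega
      have h2 : 2 ^ p + b.length = 2 ^ q := by omega
      have hpq : p < q := by
        have hlt : (2:ℕ) ^ p < 2 ^ q := by omega
        exact (Nat.pow_lt_pow_iff_right (a := 2) (by norm_num)).mp hlt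
      have hq2 : 2 ^ (p + 1) ≤ 2 ^ q := Nat.pow_le_pow_right (by norm_num) hpq
      have : 2 ^ (p + 1) = 2 ^ p + 2 ^ p := by ring
      have hrp : 2 ^ r < 2 ^ p := by omega
      have hr1 : 1 ≤ 2 ^ r := Nat.one_le_two_pow
      omega
    have hS₀fin : S₀.Finite := by
      apply Set.Finite.subset (Set.finite_Iio (Fintype.card σ))
      intro n hn
      have : List.replicate n () ∈ M.accepts := hsub (by simp [unaryLang, hn])
      simpa using hshort _ this
    refine ⟨hS₀fin, ?_⟩
    ext n
    simp only [Set.mem_inter_iff, Set.mem_empty_iff_false, iff_false, not_and]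
    intro hn0 hn1
    have : List.replicate n () ∈ M.accepts := hsub (by simp [unaryLang, hn0])
    exact hdisj' _ this (by simpa using hn1)
  · rintro ⟨hfin, hdisj⟩
    refine ⟨unaryLang S₀, finite_unary_regular S₀ hfin, le_refl _, ?_⟩
    rw [eq_bot_iff]
    rintro w ⟨h0, h1⟩
    have : w.length ∈ S₀ ∩ S₁ := ⟨h0, h1⟩
    rw [hdisj] at this
    exact this.elim
end

section
/- Let Σ and Γ be alphabets, let T ⊆ Σ* × Γ* be a relation, and for K ⊆ Γ* write TK = {u ∈ Σ* : ∃v ∈ K, (u,v) ∈ T}, and for L ⊆ Σ* write T⁻¹L = {v ∈ Γ* : ∃u ∈ L, (u,v) ∈ T}. Assume that for every regular language R ⊆ Σ* the language T⁻¹R is regular, and that for every regular language R ⊆ Γ* the language TR is regular. Then for all L ⊆ Σ* and K ⊆ Γ*: L and TK are regularly separable if and only if T⁻¹L and K are regularly separable. -/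
/-- The image `TK = {u : ∃ v ∈ K, (u,v) ∈ T}` of a language under a relation. -/
def relImage {α β : Type} (T : List α → List β → Prop) (K : Language β) : Language α :=
  {u : List α | ∃ v ∈ K, T u v}

/-- The preimage `T⁻¹L = {v : ∃ u ∈ L, (u,v) ∈ T}` of a language under a relation. -/
def relPreimage {α β : Type} (T : List α → List β → Prop) (L : Language α) : Language β :=
  {v : List β | ∃ u ∈ L, T u v}

lemma isRegular_compl {γ : Type} {R : Language γ} (h : R.IsRegular) :
    Language.IsRegular (Rᶜ : Language γ) := by
  obtain ⟨σ, _, M, hM⟩ := h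
  exact ⟨σ, ‹_›, ⟨M.step, M.start, M.acceptᶜ⟩, by
    ext x
    have : x ∈ M.accepts ↔ x ∈ R := by rw [hM]
    simp only [DFA.mem_accepts] at this
    exact not_congr this⟩

lemma disjoint_iff' {γ : Type} {A B : Language γ} : A ⊓ B = ⊥ ↔ ∀ x, x ∈ A → x ∉ B := by
  constructor
  · intro h x hA hB
    have : x ∈ A ⊓ B := ⟨hA, hB⟩
    rw [h] at this
    exact this
  · intro h
    ext x
    exact ⟨fun ⟨hA, hB⟩ => h x hA hB, False.elim⟩

theorem stmt2 {α β : Type} (T : List α → List β → Prop)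
    (hpre : ∀ R : Language α, R.IsRegular → (relPreimage T R).IsRegular)
    (himg : ∀ R : Language β, R.IsRegular → (relImage T R).IsRegular)
    (L : Language α) (K : Language β) :
    RegularlySeparable L (relImage T K) ↔ RegularlySeparable (relPreimage T L) K := by
  constructor
  · rintro ⟨R, hreg, hLR, hdisj⟩
    refine ⟨relPreimage T R, hpre R hreg, ?_, ?_⟩
    · rintro v ⟨u, huL, hT⟩
      exact ⟨u, hLR huL, hT⟩
    · rw [disjoint_iff'] at hdisj ⊢
      rintro v ⟨u, huR, hT⟩ hvK
      exact hdisj u huR ⟨v, hvK, hT⟩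
  · rintro ⟨S, hreg, hLS, hdisj⟩
    rw [disjoint_iff'] at hdisj
    refine ⟨(relImage T (Sᶜ))ᶜ, isRegular_compl (himg _ (isRegular_compl hreg)), ?_, ?_⟩
    · intro u huL
      rintro ⟨v, hvS, hT⟩
      exact hvS (hLS ⟨u, huL, hT⟩)
    · rw [disjoint_iff']
      rintro u hu ⟨v, hvK, hT⟩
      exact hu ⟨v, fun hvS => hdisj v hvS hvK, hT⟩
end

section
/- Let S₀, S₁ ⊆ 2^ℕ be sets of powers of two with S₁ infinite. Then the unary languages a^{(ℕ \ 2^ℕ) ∪ S₀} and a^{S₁} are not regularly separable. -/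
theorem stmt8 (S₀ S₁ : Set ℕ)
    (h₀ : S₀ ⊆ {x : ℕ | ∃ n : ℕ, x = 2 ^ n})
    (h₁ : S₁ ⊆ {x : ℕ | ∃ n : ℕ, x = 2 ^ n})
    (hinf : S₁.Infinite) :
    ¬ RegularlySeparable (unaryLang ({x : ℕ | ¬ ∃ n : ℕ, x = 2 ^ n} ∪ S₀)) (unaryLang S₁) := by
  rintro ⟨R, ⟨σ, hfin, M, hM⟩, hsub, hdisj⟩
  -- complement DFA
  let N : DFA Unit σ := ⟨M.step, M.start, M.acceptᶜ⟩
  have hN : ∀ w : List Unit, w ∈ N.accepts ↔ w ∉ R := by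
    intro w
    rw [← hM]
    rfl
  -- any word not in R has power-of-two length
  have hpow : ∀ w : List Unit, w ∉ R → ∃ n : ℕ, w.length = 2 ^ n := by
    intro w hw
    by_contra hc
    exact hw (hsub (Or.inl hc))
  -- pick x ∈ S₁ with x ≥ card σ
  obtain ⟨x, hx₁, hxb⟩ := hinf.exists_gt (Fintype.card σ)
  have hxR : List.replicate x () ∉ R := by
    intro hR
    have : List.replicate x () ∈ R ⊓ unaryLang S₁ :=
      ⟨hR, by simpa [unaryLang] using hx₁⟩
    rw [hdisj] at this
    exact this
  have hacc : List.replicate x () ∈ N.accepts := (hN _).mpr hxR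
  obtain ⟨a, b, c, heq, hlen, hb, hsubL⟩ :=
    N.pumping_lemma hacc (by simpa using hxb.le)
  have hx : a.length + b.length + c.length = x := by
    have := congrArg List.length heq
    simpa [Nat.add_assoc] using this.symm
  have hmem : ∀ k : ℕ, (a ++ (List.replicate k b).flatten ++ c) ∈ N.accepts := by
    intro k
    apply hsubL
    refine Language.append_mem_mul (Language.append_mem_mul rfl ?_) rfl
    exact Language.join_mem_kstar (by intro y hy; exact (List.eq_of_mem_replicate hy))
  have hlen' : ∀ k : ℕ, (a ++ (List.replicate k b).flatten ++ c).length
      = a.length + k * b.length + c.length := by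
    intro k
    simp [List.length_flatten, List.map_replicate, Nat.mul_comm, Nat.add_assoc]
  have hpow2 : ∀ k : ℕ, ∃ n : ℕ, a.length + k * b.length + c.length = 2 ^ n := by
    intro k
    have := hpow _ ((hN _).mp (hmem k))
    rwa [hlen' k] at this
  obtain ⟨p, hp⟩ := hpow2 2
  obtain ⟨q, hq⟩ := hpow2 3
  obtain ⟨n, hn⟩ := h₁ hx₁
  have hbpos : 0 < b.length := List.length_pos_iff.mpr hb
  have hxpos : 0 < x := by rw [hn]; positivity
  -- 2^p = x + m, 2^q = x + 2m with m ≥ 1, so 2^p < 2^q hence 2^(p+1) ≤ 2^q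
  have hpq : p < q := by
    have h1 : 2 ^ p < 2 ^ q := by omega
    exact (Nat.pow_lt_pow_iff_right one_lt_two).mp h1
  have h2 : 2 ^ (p + 1) ≤ 2 ^ q := Nat.pow_le_pow_right (by norm_num) hpq
  rw [pow_succ] at h2
  omega
end

section
/- Let Σ be an alphabet, let # be a letter of the ambient alphabet that does not occur in any word of L or of K, where L and K are languages all of whose words avoid #. Then L ∩ K ≠ ∅ if and only if the language L·{#}* ∩ K·{#}* is infinite. -/
open Computability

lemma mem_hash_kstar {α : Type} (hash : α) (w : List α) :
    w ∈ ({[hash]} : Language α)∗ ↔ ∃ n, w = List.replicate n hash := by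
  rw [Language.mem_kstar]
  constructor
  · rintro ⟨S, rfl, hS⟩
    induction S with
    | nil => exact ⟨0, rfl⟩
    | cons a S ih =>
      obtain ⟨n, hn⟩ := ih (fun y hy => hS y (List.mem_cons_of_mem _ hy))
      have ha : a = [hash] := hS a List.mem_cons_self
      exact ⟨n + 1, by simp [ha, hn, List.replicate_succ]⟩
  · rintro ⟨n, rfl⟩
    refine ⟨List.replicate n [hash], ?_, ?_⟩
    · induction n with
      | zero => rfl
      | succ n ih =>
          rw [List.replicate_succ, List.replicate_succ, List.flatten_cons, ← ih]
          rfl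
    · intro y hy; rw [List.eq_of_mem_replicate hy]; rfl

lemma strip_eq {α : Type} (hash : α) :
    ∀ (u v : List α) (m k : ℕ), hash ∉ u → hash ∉ v → m ≤ k →
    u ++ List.replicate m hash = v ++ List.replicate k hash → u = v := by
  intro u v m k hu hv hmk h
  have hk : List.replicate k hash = List.replicate (k - m) hash ++ List.replicate m hash := by
    rw [← List.replicate_add]; congr 1; omega
  rw [hk, ← List.append_assoc] at h
  have h2 : u = v ++ List.replicate (k - m) hash := List.append_cancel_right h
  rcases Nat.eq_zero_or_pos (k - m) with h0 | h0
  · simpa [h0] using h2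
  · exfalso
    apply hu
    rw [h2]
    exact List.mem_append_right _ (List.mem_replicate.mpr ⟨by omega, rfl⟩)

theorem stmt12 {α : Type} (hash : α) (L K : Language α)
    (hL : ∀ w ∈ L, hash ∉ w) (hK : ∀ w ∈ K, hash ∉ w) :
    (∃ w : List α, w ∈ L ∧ w ∈ K) ↔
      {w : List α | w ∈ L * ({[hash]} : Language α)∗ ∧
                    w ∈ K * ({[hash]} : Language α)∗}.Infinite := by
  constructor
  · rintro ⟨w, hwL, hwK⟩
    apply Set.infinite_of_injective_forall_mem
      (f := fun n : ℕ => w ++ List.replicate n hash)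
    case hi =>
      intro a b hab
      have := congrArg List.length hab
      simpa using this
    case hf =>
      intro n
      constructor
      · exact Language.mem_mul.mpr ⟨w, hwL, _, (mem_hash_kstar hash _).mpr ⟨n, rfl⟩, rfl⟩
      · exact Language.mem_mul.mpr ⟨w, hwK, _, (mem_hash_kstar hash _).mpr ⟨n, rfl⟩, rfl⟩
  · intro hinf
    obtain ⟨w, hw1, hw2⟩ := hinf.nonempty
    obtain ⟨u, huL, s, hs, hws⟩ := Language.mem_mul.mp hw1
    obtain ⟨v, hvK, t, ht, hwt⟩ := Language.mem_mul.mp hw2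
    obtain ⟨m, rfl⟩ := (mem_hash_kstar hash _).mp hs
    obtain ⟨k, rfl⟩ := (mem_hash_kstar hash _).mp ht
    have heq : u ++ List.replicate m hash = v ++ List.replicate k hash := by
      rw [hws, hwt]
    have huv : u = v := by
      rcases le_or_gt m k with h | h
      · exact strip_eq hash u v m k (hL u huL) (hK v hvK) h heq
      · exact (strip_eq hash v u k m (hK v hvK) (hL u huL) h.le heq.symm).symm
    exact ⟨u, huL, huv ▸ hvK⟩
end
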